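/- With s* = ((L−1)/L)·N + 1 for integers L ≥ 1 dividing N, the optimally-stable code rate R_s(N_B, w, s*) is bounded below by (log₂ η)/η where η = [((L−1)N + 2L)/((L−1)N + L)] · [N_B/(N_B + 1)]. -/

import Mathlib

open Real

lemma pow_le_pow_mul_choose : ∀ (k n : ℕ), k ≤ n → n ^ k ≤ k ^ k * n.choose k := by
  intro k
  induction k with
  | zero => intro n _; simp
  | succ k ih =>
    rintro (_ | m) hkn
    · omega
    have hkm : k ≤ m := by omega
    have key : (m + 1) * Nat.choose m k = Nat.choose (m + 1) (k + 1) * (k + 1) :=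
      Nat.add_one_mul_choose_eq m k
    have ihm := ih m hkm
    -- goal: (m+1)^(k+1) ≤ (k+1)^(k+1) * C(m+1,k+1)
    have h1 : ((m + 1) * k) ^ k ≤ ((k + 1) * m) ^ k :=
      Nat.pow_le_pow_left (by nlinarith) k
    have h2 : (k + 1) * (m + 1) ^ (k + 1) * k ^ k ≤ (k + 1) ^ (k + 1) * ((m + 1) * Nat.choose m k) * k ^ k := by
      calc (k + 1) * (m + 1) ^ (k + 1) * k ^ k
          = (k + 1) * (m + 1) * ((m + 1) ^ k * k ^ k) := by ring
        _ = (k + 1) * (m + 1) * ((m + 1) * k) ^ k := by rw [Nat.mul_pow]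
        _ ≤ (k + 1) * (m + 1) * ((k + 1) * m) ^ k := by
            exact Nat.mul_le_mul_left _ h1
        _ = (k + 1) ^ (k + 1) * (m + 1) * m ^ k := by
            rw [Nat.mul_pow]; ring
        _ ≤ (k + 1) ^ (k + 1) * (m + 1) * (k ^ k * Nat.choose m k) := by
            exact Nat.mul_le_mul_left _ ihm
        _ = (k + 1) ^ (k + 1) * ((m + 1) * Nat.choose m k) * k ^ k := by ring
    rw [key] at h2
    have h3 : (k + 1) * (m + 1) ^ (k + 1) * k ^ k ≤ (k + 1) * ((k + 1) ^ (k + 1) * Nat.choose (m + 1) (k + 1)) * k ^ k := by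
      calc (k + 1) * (m + 1) ^ (k + 1) * k ^ k ≤ (k + 1) ^ (k + 1) * (Nat.choose (m + 1) (k + 1) * (k + 1)) * k ^ k := h2
        _ = (k + 1) * ((k + 1) ^ (k + 1) * Nat.choose (m + 1) (k + 1)) * k ^ k := by ring
    have hk : 0 < k ^ k := by
      rcases Nat.eq_zero_or_pos k with h | h
      · simp [h]
      · positivity
    have h4 := Nat.le_of_mul_le_mul_right h3 hk
    exact Nat.le_of_mul_le_mul_left h4 (by omega)

theorem optimally_stable_rate_lower_bound (N N_B L w sstar : ℕ)
    (hL : 0 < L) (hdvd : L ∣ N) (hN : 0 < N)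
    (hsstar : L * sstar = (L - 1) * N + L)
    (hw : (sstar + 1) * w = sstar * (N_B + 1))
    (hwpos : 0 < w) (hwN : w ≤ N_B) (hNB : 0 < N_B) :
    Real.logb 2 ((((L : ℝ) - 1) * N + 2 * L) / (((L : ℝ) - 1) * N + L) *
        ((N_B : ℝ) / ((N_B : ℝ) + 1))) /
      ((((L : ℝ) - 1) * N + 2 * L) / (((L : ℝ) - 1) * N + L) *
        ((N_B : ℝ) / ((N_B : ℝ) + 1))) ≤
      Real.logb 2 (Nat.choose N_B w) / N_B := by
  have hs : 0 < sstar := by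
    rcases Nat.eq_zero_or_pos sstar with h | h
    · subst h
      rw [Nat.mul_zero] at hsstar
      have := (Nat.add_eq_zero.mp hsstar.symm).2
      omega
    · exact h
  -- cast hypotheses to ℝ
  have hL1 : (1:ℕ) ≤ L := hL
  have hcast : ((L - 1 : ℕ) : ℝ) = (L:ℝ) - 1 := by
    push_cast [Nat.cast_sub hL1]; ring
  have hsR : (L:ℝ) * sstar = ((L:ℝ) - 1) * N + L := by
    have := congrArg (Nat.cast : ℕ → ℝ) hsstar
    push_cast at this
    rw [hcast] at this
    linarith [this]
  have hwR : ((sstar:ℝ) + 1) * w = (sstar:ℝ) * ((N_B:ℝ) + 1) := by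
    exact_mod_cast congrArg (Nat.cast : ℕ → ℝ) hw
  have hwpos' : (0:ℝ) < w := by exact_mod_cast hwpos
  have hNBpos : (0:ℝ) < N_B := by exact_mod_cast hNB
  have hsR' : (0:ℝ) < sstar := by exact_mod_cast hs
  have hLR : (0:ℝ) < L := by exact_mod_cast hL
  -- η simplifies to N_B / w
  have heta : (((L : ℝ) - 1) * N + 2 * L) / (((L : ℝ) - 1) * N + L) *
      ((N_B : ℝ) / ((N_B : ℝ) + 1)) = (N_B : ℝ) / w := by
    have h1 : ((L : ℝ) - 1) * N + L = (L:ℝ) * sstar := hsR.symm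
    have h2 : ((L : ℝ) - 1) * N + 2 * L = (L:ℝ) * ((sstar:ℝ) + 1) := by linarith
    rw [h1, h2]
    field_simp
    linear_combination hwR
  rw [heta]
  -- now show logb 2 (N_B/w) / (N_B/w) ≤ logb 2 C / N_B
  have hC : ((N_B:ℝ) / w) ^ w ≤ (Nat.choose N_B w : ℝ) := by
    have hnat := pow_le_pow_mul_choose w N_B hwN
    have hr : ((N_B:ℝ)) ^ w ≤ (w:ℝ) ^ w * (Nat.choose N_B w : ℝ) := by
      exact_mod_cast hnat
    rw [div_pow, div_le_iff₀ (by positivity)]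
    linarith [hr]
  have hetapos : (0:ℝ) < (N_B:ℝ) / w := by positivity
  have hlog : (w:ℝ) * Real.logb 2 ((N_B:ℝ)/w) ≤ Real.logb 2 (Nat.choose N_B w) := by
    have : Real.logb 2 (((N_B:ℝ)/w) ^ w) ≤ Real.logb 2 (Nat.choose N_B w) :=
      Real.logb_le_logb_of_le (by norm_num) (by positivity) hC
    rwa [Real.logb_pow] at this
  have hrewrite : Real.logb 2 ((N_B:ℝ)/w) / ((N_B:ℝ)/w)
      = ((w:ℝ) * Real.logb 2 ((N_B:ℝ)/w)) / N_B := by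
    field_simp
  rw [hrewrite]
  exact div_le_div_of_nonneg_right hlog hNBpos.le |>.trans_eq rfl
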